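/- Let θ be a reflexive and transitive binary relation on {1, 2, ..., n} and let R be a commutative ring. If A ∈ M_n(θ,R) is invertible in M_n(R), then A⁻¹ ∈ M_n(θ,R). -/

import Mathlib

lemma chain_aux {n : ℕ} (θ : Fin n → Fin n → Prop)
    (hrefl : ∀ i, θ i i) (htrans : ∀ i j k, θ i j → θ j k → θ i k)
    (σ : Equiv.Perm (Fin n)) (i : Fin n)
    (h : ∀ c, c ≠ i → θ (σ c) c) :
    ∀ k t, (∀ s, t ≤ s → s < t + k → σ^[s] i ≠ i) →
      θ (σ^[t + k] i) (σ^[t] i) := by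
  intro k
  induction k with
  | zero => intro t _; exact hrefl _
  | succ k ih =>
    intro t ht
    have h1 : θ (σ^[t + 1] i) (σ^[t] i) := by
      have := h (σ^[t] i) (ht t le_rfl (by omega))
      rwa [show σ ((⇑σ)^[t] i) = (⇑σ)^[t+1] i from (Function.iterate_succ_apply' σ t i).symm] at this
    have h2 : θ (σ^[(t + 1) + k] i) (σ^[t + 1] i) :=
      ih (t + 1) (fun s hs hs' => ht s (by omega) (by omega))
    have e : t + (k + 1) = (t + 1) + k := by omega
    rw [e]
    exact htrans _ _ _ h2 h1

lemma chain {n : ℕ} (θ : Fin n → Fin n → Prop)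
    (hrefl : ∀ i, θ i i) (htrans : ∀ i j k, θ i j → θ j k → θ i k)
    (σ : Equiv.Perm (Fin n)) (i : Fin n)
    (h : ∀ c, c ≠ i → θ (σ c) c) :
    θ i (σ i) := by
  have hper : i ∈ Function.periodicPts σ := by
    refine ⟨orderOf σ, orderOf_pos σ, ?_⟩
    show σ^[orderOf σ] i = i
    rw [Equiv.Perm.iterate_eq_pow, pow_orderOf_eq_one]
    rfl
  have hpos : 0 < Function.minimalPeriod σ i :=
    Function.minimalPeriod_pos_of_mem_periodicPts hper
  set m := Function.minimalPeriod σ i with hm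
  have key : θ (σ^[1 + (m - 1)] i) (σ^[1] i) := by
    apply chain_aux θ hrefl htrans σ i h
    intro s hs hs' hfix
    have : m ≤ s := Function.IsPeriodicPt.minimalPeriod_le (by omega) hfix
    omega
  have hmi : σ^[m] i = i := Function.iterate_minimalPeriod
  have e : 1 + (m - 1) = m := by omega
  rw [e, hmi] at key
  simpa using key

theorem stmt_12 {R : Type*} [CommRing R] {n : ℕ}
    (θ : Fin n → Fin n → Prop)
    (hrefl : ∀ i, θ i i) (htrans : ∀ i j k, θ i j → θ j k → θ i k)
    (A : (Matrix (Fin n) (Fin n) R)ˣ)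
    (hA : ∀ i j, ¬ θ i j → A.val i j = 0) :
    ∀ i j, ¬ θ i j → (A⁻¹).val i j = 0 := by
  have hadj : ∀ i j, ¬ θ i j → (A.val).adjugate i j = 0 := by
    intro i j hij
    rw [Matrix.adjugate_apply, Matrix.det_apply]
    apply Finset.sum_eq_zero
    intro σ _
    suffices hp : (∏ c, (A.val.updateRow j (Pi.single i 1)) (σ c) c) = 0 by
      rw [hp, smul_zero]
    by_cases hσ : σ i = j
    · have hall : ¬ ∀ c, c ≠ i → θ (σ c) c := by
        intro hall
        exact hij (hσ ▸ chain θ hrefl htrans σ i hall)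
      push_neg at hall
      obtain ⟨c, hc, hcθ⟩ := hall
      apply Finset.prod_eq_zero (Finset.mem_univ c)
      have hne : σ c ≠ j := fun e => hc (by
        have := σ.injective (e.trans hσ.symm); exact this)
      rw [Matrix.updateRow_ne hne]
      exact hA _ _ hcθ
    · apply Finset.prod_eq_zero (Finset.mem_univ (σ⁻¹ j))
      have e : σ (σ⁻¹ j) = j := Equiv.apply_symm_apply σ j
      rw [e, Matrix.updateRow_self]
      refine Pi.single_eq_of_ne (fun e' : σ⁻¹ j = i => hσ ?_) 1
      rw [← e']
      exact Equiv.apply_symm_apply σ j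
  intro i j hij
  have h1 : (A⁻¹).val = (A.val)⁻¹ := Matrix.coe_units_inv A
  rw [h1, Matrix.inv_def, Matrix.smul_apply, hadj i j hij, smul_zero]
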